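/- For all positive integers m and n, T(m,n) = P(m,n) − N(m,n), where P(m,n) is the number of 2-Motzkin paths of length m+n−2 whose m-th step begins on an even level, and N(m,n) is the number of 2-Motzkin paths of length m+n−2 whose m-th step begins on an odd level. -/

import Mathlib

/-- Steps of a 2-Motzkin path: up, down, and two kinds of level steps. -/
inductive MStep : Type
  | up | down | straight | wavy
deriving DecidableEq

/-- The vertical displacement of a 2-Motzkin step. -/
def mval : MStep → ℤ
  | .up => 1
  | .down => -1
  | .straight => 0
  | .wavy => 0

/-- The level (y-coordinate) of the path `p` after `k` steps. -/
def mlvl (p : List MStep) (k : ℕ) : ℤ := ((p.take k).map mval).sum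

/-- `p` is a 2-Motzkin path: it ends on the x-axis and never goes below it. -/
def IsMotzkin2 (p : List MStep) : Prop :=
  mlvl p p.length = 0 ∧ ∀ k ≤ p.length, 0 ≤ mlvl p k

/-- The super Catalan number `T(m,n)` as a rational number. -/
def T (m n : ℕ) : ℚ :=
  (Nat.factorial (2 * m) * Nat.factorial (2 * n) : ℚ) /
    (2 * (Nat.factorial m * Nat.factorial n * Nat.factorial (m + n)))

open Finset

/-- Extended binomial coefficient. -/
def cc (n : ℕ) (k : ℤ) : ℤ := if 0 ≤ k ∧ k ≤ n then n.choose k.toNat else 0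

lemma cc_of_neg {n : ℕ} {k : ℤ} (h : k < 0) : cc n k = 0 := by
  unfold cc; rw [if_neg (by omega)]

lemma cc_of_gt {n : ℕ} {k : ℤ} (h : (n:ℤ) < k) : cc n k = 0 := by
  unfold cc; rw [if_neg (by omega)]

lemma cc_coe {n t : ℕ} (h : t ≤ n) : cc n t = n.choose t := by
  unfold cc; rw [if_pos (by constructor <;> omega)]; simp

lemma cc_pascal (n : ℕ) (k : ℤ) : cc (n+1) k = cc n k + cc n (k-1) := by
  rcases lt_or_ge k 0 with hk | hk
  · rw [cc_of_neg hk, cc_of_neg hk, cc_of_neg (by omega)]; ring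
  · obtain ⟨t, rfl⟩ : ∃ t:ℕ, k = t := ⟨k.toNat, by omega⟩
    cases t with
    | zero =>
      rw [cc_coe (by omega), cc_coe (by omega), cc_of_neg (by norm_num)]
      simp
    | succ t =>
      rcases le_or_gt (t+1) n with h | h
      · rw [cc_coe (by omega), cc_coe h]
        push_cast
        rw [show ((t:ℤ)+1-1) = (t:ℤ) by ring, cc_coe (by omega), Nat.choose_succ_succ]
        push_cast; ring
      · rcases le_or_gt (t+1) (n+1) with h2 | h2
        · have ht : t = n := by omega
          subst ht
          rw [cc_coe (le_refl _), cc_of_gt (by push_cast; omega)]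
          push_cast
          rw [show ((t:ℤ)+1-1) = (t:ℤ) by ring, cc_coe (le_refl _)]
          simp
        · rw [cc_of_gt (by push_cast; omega), cc_of_gt (by push_cast; omega),
            cc_of_gt (by push_cast; omega)]
          ring

lemma cc_pascal2 (N : ℕ) (k : ℤ) :
    cc (N+1+1) k = cc N k + 2 * cc N (k-1) + cc N (k-2) := by
  rw [cc_pascal, cc_pascal, cc_pascal, show k-1-1 = k-2 from by ring]
  ring

/-- Ballot-type formula: number of nonnegative 2-Motzkin prefixes of length `ℓ`
ending at height `h`. -/
def F (ℓ : ℕ) (h : ℤ) : ℤ := cc (2*ℓ+1) (ℓ - h) - cc (2*ℓ+1) (ℓ - h - 1)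

lemma F_rec (ℓ : ℕ) (h : ℤ) : F (ℓ+1) h = F ℓ (h+1) + 2 * F ℓ h + F ℓ (h-1) := by
  unfold F
  rw [show 2*(ℓ+1)+1 = 2*ℓ+1+1+1 from by ring, cc_pascal2, cc_pascal2]
  push_cast
  rw [show (ℓ:ℤ) + 1 - h = ℓ - h + 1 from by ring,
    show (ℓ:ℤ) - h + 1 - 1 = ℓ - h from by ring,
    show (ℓ:ℤ) - h + 1 - 2 = ℓ - h - 1 from by ring,
    show (ℓ:ℤ) - (h+1) = ℓ - h - 1 from by ring,
    show (ℓ:ℤ) - h - 1 - 1 = ℓ - h - 2 from by ring,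
    show (ℓ:ℤ) - (h-1) = ℓ - h + 1 from by ring,
    show (ℓ:ℤ) - h + 1 - 1 = ℓ - h from by ring]
  ring

lemma F_neg_one (ℓ : ℕ) : F ℓ (-1) = 0 := by
  unfold F
  rw [show (ℓ:ℤ) - (-1) - 1 = ((ℓ:ℕ):ℤ) from by push_cast; ring,
    show (ℓ:ℤ) - (-1) = ((ℓ+1:ℕ):ℤ) from by push_cast; ring,
    cc_coe (by omega), cc_coe (by omega)]
  have h := Nat.choose_symm (show ℓ ≤ 2*ℓ+1 by omega)
  rw [show 2*ℓ+1-ℓ = ℓ+1 from by omega] at h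
  rw [h]; ring

lemma F_zero_of_gt {ℓ : ℕ} {h : ℤ} (hh : (ℓ:ℤ) < h) : F ℓ h = 0 := by
  unfold F
  rw [cc_of_neg (by omega), cc_of_neg (by omega)]; ring

lemma F_zero_height (h : ℤ) (hh : 0 ≤ h) : F 0 h = if h = 0 then 1 else 0 := by
  rcases eq_or_lt_of_le hh with h0 | h0
  · rw [if_pos h0.symm, ← h0]
    norm_num [F, cc]
  · rw [if_neg (by omega), F_zero_of_gt (by push_cast; omega)]

def S (a b : ℕ) : ℤ := ∑ h ∈ range (a+b+1), (-1)^h * F a h * F b h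

lemma S_symm (a b : ℕ) : S a b = S b a := by
  unfold S
  rw [show b+a+1 = a+b+1 from by ring]
  exact Finset.sum_congr rfl (fun h _ => by ring)

lemma S_extend (a b N : ℕ) (hN : a+b+1 ≤ N) :
    S a b = ∑ h ∈ range N, (-1)^h * F a h * F b h := by
  unfold S
  refine Finset.sum_subset (Finset.range_subset_range.mpr hN) ?_
  intro h _ hh
  rw [Finset.mem_range, not_lt] at hh
  rw [F_zero_of_gt (show (a:ℤ) < h from by push_cast; omega)]
  ring

lemma S_rec (a b : ℕ) : S a (b+1) + S (a+1) b = 4 * S a b := by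
  set n := a + b + 1 with hn
  set g : ℕ → ℤ := fun h => (-1)^h * (F a h * F b ((h:ℤ)+1) + F a ((h:ℤ)+1) * F b h) with hg
  set d : ℕ → ℤ := fun h => (-1)^h * (F a h * F b ((h:ℤ)-1) + F a ((h:ℤ)-1) * F b h) with hd
  have key : ∀ h : ℕ, (-1)^h * F a h * F (b+1) h + (-1)^h * F (a+1) h * F b h
      - 4 * ((-1)^h * F a h * F b h) = g h + d h := by
    intro h; rw [hg, hd]; simp only []; rw [F_rec, F_rec]; ring
  have main : S a (b+1) + S (a+1) b - 4 * S a b = ∑ h ∈ range (n+1), (g h + d h) := by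
    rw [S_extend a (b+1) (n+1) (by omega), S_extend (a+1) b (n+1) (by omega),
      S_extend a b (n+1) (by omega), Finset.mul_sum, ← Finset.sum_add_distrib,
      ← Finset.sum_sub_distrib]
    exact Finset.sum_congr rfl fun h _ => key h
  have hd0 : d 0 = 0 := by
    rw [hd]; simp only []
    norm_num
    rw [F_neg_one, F_neg_one]; ring
  have hds : ∀ h : ℕ, d (h+1) = - g h := by
    intro h; rw [hd, hg]; simp only []
    push_cast
    rw [show (h:ℤ) + 1 - 1 = (h:ℤ) from by ring]
    ring
  have hgn : g n = 0 := by
    rw [hg]; simp only []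
    rw [F_zero_of_gt (show (a:ℤ) < (n:ℤ) from by push_cast; omega),
      F_zero_of_gt (show (b:ℤ) < (n:ℤ) from by push_cast; omega)]
    ring
  have sums : ∑ h ∈ range (n+1), (g h + d h) = 0 := by
    rw [Finset.sum_add_distrib, Finset.sum_range_succ, Finset.sum_range_succ' d, hd0, hgn]
    have : ∑ h ∈ range n, d (h+1) = ∑ h ∈ range n, (- g h) :=
      Finset.sum_congr rfl fun h _ => hds h
    rw [this, Finset.sum_neg_distrib]
    ring
  omega

lemma S_zero (a : ℕ) : S a 0 = F a 0 := by
  unfold S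
  rw [Finset.sum_eq_single 0]
  · have h00 : F 0 0 = 1 := by norm_num [F, cc]
    norm_num [h00]
  · intro h _ hh
    rw [F_zero_height _ (by positivity), if_neg (by exact_mod_cast hh)]
    ring
  · intro habs; exact absurd (Finset.mem_range.mpr (by omega)) habs

lemma F_zero_val (a : ℕ) : ((a:ℤ)+2) * F a 0 = ((2*a+2).choose (a+1) : ℤ) := by
  have hsym : (2*a+1).choose (a+1) = (2*a+1).choose a := by
    have h := Nat.choose_symm (show a ≤ 2*a+1 by omega)
    rwa [show 2*a+1-a = a+1 from by omega] at h
  have hc2 : (2*a+2).choose (a+1) = 2 * ((2*a+1).choose a) := by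
    rw [show 2*a+2 = (2*a+1)+1 from by ring, Nat.choose_succ_succ, hsym]; ring
  cases a with
  | zero => norm_num [F, cc]
  | succ a =>
    have hstep : (2*(a+1)+1).choose (a+1) * (a+1) = (2*(a+1)+1).choose a * (a+3) := by
      have h := Nat.choose_succ_right_eq (2*(a+1)+1) a
      rw [show 2*(a+1)+1-a = a+3 from by omega] at h
      exact h
    unfold F
    rw [show ((a+1:ℕ):ℤ) - 0 - 1 = ((a:ℕ):ℤ) from by push_cast; ring,
      show ((a+1:ℕ):ℤ) - 0 = (((a+1:ℕ)):ℤ) from by ring,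
      cc_coe (by omega), cc_coe (by omega), hc2]
    have hstep' : ((2*(a+1)+1).choose (a+1) : ℤ) * (a+1) = ((2*(a+1)+1).choose a : ℤ) * (a+3) := by
      exact_mod_cast hstep
    push_cast
    push_cast at hstep'
    linarith

lemma fact_ne (k : ℕ) : ((Nat.factorial k : ℚ)) ≠ 0 := by
  exact_mod_cast Nat.factorial_ne_zero k

lemma T_base (a : ℕ) : (S a 0 : ℚ) = T (a+1) 1 := by
  rw [S_zero]
  have h1 : ((a:ℚ)+2) * (F a 0 : ℚ) = ((2*a+2).choose (a+1) : ℚ) := by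
    exact_mod_cast congrArg (fun z : ℤ => (z : ℚ)) (F_zero_val a)
  have h2 : ((2*a+2).choose (a+1) : ℚ) * (a+1).factorial * (a+1).factorial =
      ((2*a+2).factorial : ℚ) := by
    have := Nat.choose_mul_factorial_mul_factorial (show a+1 ≤ 2*a+2 by omega)
    rw [show 2*a+2-(a+1) = a+1 from by omega] at this
    exact_mod_cast this
  unfold T
  rw [show 2*(a+1) = 2*a+2 from by ring, show (a+1)+1 = a+2 from rfl,
    Nat.factorial_succ (a+1)]
  have ha2 : ((a:ℚ)+2) ≠ 0 := by positivity
  field_simp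
  push_cast
  push_cast at h1 h2
  linear_combination (2*(((a+1).factorial : ℚ))*(((a+1).factorial : ℚ))) * h1 + 2 * h2

lemma T_rec (m n : ℕ) : T (m+1) n + T m (n+1) = 4 * T m n := by
  unfold T
  rw [show 2*(m+1) = (2*m+1)+1 from by ring, show 2*(n+1) = (2*n+1)+1 from by ring,
    show (m+1)+n = (m+n)+1 from by ring, show m+(n+1) = (m+n)+1 from by ring,
    Nat.factorial_succ ((2*m+1)), Nat.factorial_succ (2*m), Nat.factorial_succ ((2*n+1)),
    Nat.factorial_succ (2*n), Nat.factorial_succ m, Nat.factorial_succ n,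
    Nat.factorial_succ (m+n)]
  have h1 := fact_ne (2*m)
  have h2 := fact_ne (2*n)
  have h3 := fact_ne m
  have h4 := fact_ne n
  have h5 := fact_ne (m+n)
  have h6 : ((m:ℚ)+1) ≠ 0 := by positivity
  have h7 : ((n:ℚ)+1) ≠ 0 := by positivity
  have h8 : ((m:ℚ)+(n:ℚ)+1) ≠ 0 := by positivity
  push_cast
  field_simp
  ring

lemma S_eq_T : ∀ b a : ℕ, (S a b : ℚ) = T (a+1) (b+1) := by
  intro b
  induction b with
  | zero => intro a; exact T_base a
  | succ b ih =>
    intro a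
    have h := S_rec a b
    have hc : (S a (b+1) : ℚ) = 4 * (S a b : ℚ) - (S (a+1) b : ℚ) := by
      have : ((S a (b+1) + S (a+1) b : ℤ) : ℚ) = ((4 * S a b : ℤ) : ℚ) := by rw [h]
      push_cast at this
      linarith
    rw [hc, ih a, ih (a+1)]
    have ht := T_rec (a+1) (b+1)
    rw [show a+1+1 = a+2 from rfl, show b+1+1 = b+2 from rfl] at ht
    linarith

instance : Fintype MStep where
  elems := ⟨[MStep.up, MStep.down, MStep.straight, MStep.wavy], by decide⟩
  complete := fun x => by cases x <;> decide

lemma sum_mstep (g : MStep → ℤ) :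
    (∑ s : MStep, g s) = g .up + g .down + g .straight + g .wavy := by
  rw [show (univ : Finset MStep) = {.up, .down, .straight, .wavy} from by
      ext x; cases x <;> decide,
    Finset.sum_insert (by decide), Finset.sum_insert (by decide),
    Finset.sum_insert (by decide), Finset.sum_singleton]
  ring

lemma mlvl_zero (p : List MStep) : mlvl p 0 = 0 := rfl

lemma mlvl_nil (k : ℕ) : mlvl [] k = 0 := by simp [mlvl]

lemma mlvl_cons (s : MStep) (p : List MStep) (k : ℕ) :
    mlvl (s :: p) (k+1) = mval s + mlvl p k := by
  simp [mlvl, List.take_succ_cons]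

lemma mlvl_of_ge (p : List MStep) {k : ℕ} (h : p.length ≤ k) :
    mlvl p k = mlvl p p.length := by
  unfold mlvl
  rw [List.take_of_length_le h, List.take_of_length_le (le_refl _)]

lemma mlvl_le (p : List MStep) (k : ℕ) : mlvl p k ≤ k := by
  induction p generalizing k with
  | nil => simp [mlvl_nil]
  | cons s q ih =>
    cases k with
    | zero => simp [mlvl_zero]
    | succ k =>
      rw [mlvl_cons]
      have h1 : mval s ≤ 1 := by cases s <;> simp [mval]
      have := ih k
      push_cast
      omega

lemma mlvl_add (p : List MStep) (a j : ℕ) :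
    mlvl p (a + j) = mlvl p a + mlvl (p.drop a) j := by
  unfold mlvl
  rw [List.take_add, List.map_append, List.sum_append]

lemma mlvl_append_left (p q : List MStep) {k : ℕ} (h : k ≤ p.length) :
    mlvl (p ++ q) k = mlvl p k := by
  unfold mlvl
  rw [List.take_append_of_le_length h]

def LF : ℕ → Finset (List MStep)
  | 0 => {[]}
  | n+1 => ((univ : Finset MStep) ×ˢ LF n).image (fun x => x.1 :: x.2)

lemma mem_LF {p : List MStep} {n : ℕ} : p ∈ LF n ↔ p.length = n := by
  induction n generalizing p with
  | zero =>
    simp only [LF, Finset.mem_singleton]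
    exact ⟨fun h => by simp [h], fun h => List.length_eq_zero_iff.mp h⟩
  | succ n ih =>
    simp only [LF, Finset.mem_image, Finset.mem_product, Finset.mem_univ, true_and]
    constructor
    · rintro ⟨⟨s, q⟩, hq, rfl⟩
      simp [ih.mp hq]
    · intro hp
      cases p with
      | nil => simp at hp
      | cons s q =>
        exact ⟨(s, q), ih.mpr (by simpa using hp), rfl⟩

/-- condition for a suffix starting at height `h`. -/
def sufC (n : ℕ) (h : ℤ) (q : List MStep) : Prop :=
  (∀ k ≤ n, -h ≤ mlvl q k) ∧ mlvl q n = -h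

/-- condition for a nonnegative prefix ending at height `h`. -/
def preC (n : ℕ) (h : ℤ) (p : List MStep) : Prop :=
  (∀ k ≤ n, 0 ≤ mlvl p k) ∧ mlvl p n = h

open Classical in
noncomputable def suf (n : ℕ) (h : ℤ) : ℤ :=
  ∑ q ∈ LF n, if sufC n h q then 1 else 0

open Classical in
noncomputable def pre (n : ℕ) (h : ℤ) : ℤ :=
  ∑ p ∈ LF n, if preC n h p then 1 else 0

lemma suf_neg {n : ℕ} {h : ℤ} (hh : h < 0) : suf n h = 0 := by
  unfold suf
  refine Finset.sum_eq_zero fun q hq => ?_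
  rw [if_neg]
  rintro ⟨hall, -⟩
  have := hall 0 (by omega)
  rw [mlvl_zero] at this
  omega

lemma suf_succ (n : ℕ) (h : ℤ) (hh : 0 ≤ h) :
    suf (n+1) h = suf n (h+1) + suf n (h-1) + 2 * suf n h := by
  classical
  have unf : suf (n+1) h = ∑ q ∈ LF (n+1), if sufC (n+1) h q then (1:ℤ) else 0 := rfl
  rw [unf,
    show LF (n+1) = ((univ : Finset MStep) ×ˢ LF n).image (fun x => x.1 :: x.2) from rfl]
  rw [Finset.sum_image (by rintro ⟨s, q⟩ - ⟨s', q'⟩ - hs; simpa using hs)]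
  rw [Finset.sum_product]
  have key : ∀ s : MStep, ∀ q ∈ LF n,
      (if sufC (n+1) h (s :: q) then (1:ℤ) else 0) =
      (if sufC n (h + mval s) q then (1:ℤ) else 0) := by
    intro s q hq
    congr 1
    rw [eq_iff_iff]
    unfold sufC
    constructor
    · rintro ⟨hall, hend⟩
      refine ⟨fun k hk => ?_, ?_⟩
      · have := hall (k+1) (by omega)
        rw [mlvl_cons] at this
        omega
      · rw [mlvl_cons] at hend; omega
    · rintro ⟨hall, hend⟩
      refine ⟨fun k hk => ?_, ?_⟩
      · cases k with
        | zero => rw [mlvl_zero]; omega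
        | succ k =>
          have := hall k (by omega)
          rw [mlvl_cons]
          omega
      · rw [mlvl_cons]; omega
  have : ∀ s : MStep, ∑ q ∈ LF n, (if sufC (n+1) h (s :: q) then (1:ℤ) else 0)
      = suf n (h + mval s) := by
    intro s
    rw [Finset.sum_congr rfl (key s)]
    rfl
  rw [sum_mstep (fun s => ∑ q ∈ LF n, (if sufC (n+1) h (s :: q) then (1:ℤ) else 0)),
    this MStep.up, this MStep.down, this MStep.straight, this MStep.wavy]
  show suf n (h + 1) + suf n (h + -1) + suf n (h + 0) + suf n (h + 0) = _
  rw [show h + -1 = h - 1 from by ring, show h + 0 = h from by ring]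
  ring

lemma suf_eq_F : ∀ (n : ℕ) (h : ℤ), 0 ≤ h → suf n h = F n h := by
  intro n
  induction n with
  | zero =>
    intro h hh
    classical
    have hs : suf 0 h = if sufC 0 h [] then 1 else 0 := by
      have unf : suf 0 h = ∑ q ∈ LF 0, if sufC 0 h q then (1:ℤ) else 0 := rfl
      rw [unf, show LF 0 = {[]} from rfl, Finset.sum_singleton]
    rw [hs, F_zero_height h hh]
    by_cases h0 : h = 0
    · subst h0
      have hc : sufC 0 0 [] := by
        refine ⟨fun k hk => ?_, ?_⟩
        · have hk0 : k = 0 := by omega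
          subst hk0
          rw [mlvl_zero]; norm_num
        · rw [mlvl_nil]; ring
      rw [if_pos hc, if_pos rfl]
    · rw [if_neg ?_, if_neg h0]
      rintro ⟨-, hend⟩
      rw [mlvl_nil] at hend
      omega
  | succ n ih =>
    intro h hh
    rw [suf_succ n h hh]
    rcases eq_or_lt_of_le hh with h0 | h0
    · rw [← h0,
        show (0:ℤ)+1 = 1 from by norm_num, show (0:ℤ)-1 = -1 from by norm_num,
        suf_neg (show (-1:ℤ) < 0 from by norm_num), ih 1 (by norm_num), ih 0 (by norm_num),
        F_rec 
          n 0,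
        show (0:ℤ)+1 = 1 from by norm_num, show (0:ℤ)-1 = -1 from by norm_num, F_neg_one]
      ring
    · rw [ih (h+1) (by omega), ih (h-1) (by omega), ih h hh, F_rec]
      ring

def flipStep : MStep → MStep
  | .up => .down | .down => .up | .straight => .straight | .wavy => .wavy

def rev (p : List MStep) : List MStep := (p.map flipStep).reverse

lemma rev_length (p : List MStep) : (rev p).length = p.length := by simp [rev]

lemma rev_rev (p : List MStep) : rev (rev p) = p := by
  unfold rev
  rw [List.map_reverse, List.reverse_reverse, List.map_map]
  have : flipStep ∘ flipStep = id := by funext s; cases s <;> rfl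
  rw [this, List.map_id]

lemma sum_mval_flip (l : List MStep) :
    ((l.map flipStep).map mval).sum = -((l.map mval).sum) := by
  induction l with
  | nil => simp
  | cons s t ih =>
    simp only [List.map_cons, List.sum_cons, ih]
    have : mval (flipStep s) = - mval s := by cases s <;> rfl
    rw [this]; ring

lemma mlvl_rev (p : List MStep) {k : ℕ} (hk : k ≤ p.length) :
    mlvl (rev p) k = mlvl p (p.length - k) - mlvl p p.length := by
  have hsplit : ((p.map mval).sum) =
      mlvl p (p.length - k) + ((p.drop (p.length - k)).map mval).sum := by
    conv_lhs => rw [← List.take_append_drop (p.length - k) p]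
    rw [List.map_append, List.sum_append]
    rfl
  have hfull : mlvl p p.length = (p.map mval).sum := by
    unfold mlvl; rw [List.take_length]
  have h1 : mlvl (rev p) k = -(((p.drop (p.length - k)).map mval).sum) := by
    unfold rev mlvl
    rw [List.take_reverse, List.length_map, ← List.map_drop, List.map_reverse,
      List.map_map, List.sum_reverse]
    have := sum_mval_flip (p.drop (p.length - k))
    rw [List.map_map] at this
    exact this
  rw [h1, hfull]
  linarith [hsplit]

lemma preC_iff (p : List MStep) (h : ℤ) :
    preC p.length h p ↔ sufC p.length h (rev p) := by
  constructor
  · rintro ⟨hall, hend⟩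
    refine ⟨fun k hk => ?_, ?_⟩
    · rw [mlvl_rev p hk, hend]
      have := hall (p.length - k) (by omega)
      omega
    · rw [mlvl_rev p (le_refl _), hend]
      simp [mlvl_zero]
  · rintro ⟨hall, hend⟩
    rw [mlvl_rev p (le_refl _), Nat.sub_self, mlvl_zero] at hend
    have hpn : mlvl p p.length = h := by omega
    refine ⟨fun k hk => ?_, hpn⟩
    have := hall (p.length - k) (by omega)
    rw [mlvl_rev p (by omega), hpn] at this
    rw [show p.length - (p.length - k) = k from by omega] at this
    omega

lemma pre_eq_suf (n : ℕ) (h : ℤ) : pre n h = suf n h := by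
  classical
  unfold pre suf
  refine Finset.sum_nbij' rev rev ?_ ?_ ?_ ?_ ?_
  · intro p hp; rw [mem_LF] at *; rw [rev_length, hp]
  · intro q hq; rw [mem_LF] at *; rw [rev_length, hq]
  · intro p _; exact rev_rev p
  · intro q _; exact rev_rev q
  · intro p hp
    rw [mem_LF] at hp
    congr 1
    rw [eq_iff_iff]
    subst hp
    exact preC_iff p h

noncomputable def eps (z : ℤ) : ℤ := if Even z then 1 else -1

lemma eps_coe (h : ℕ) : eps (h : ℤ) = (-1)^h := by
  unfold eps
  by_cases he : Even h
  · rw [if_pos (by exact_mod_cast he), Even.neg_one_pow he]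
  · rw [if_neg (by exact_mod_cast he), Odd.neg_one_pow (Nat.not_even_iff_odd.mp he)]

open Classical in
noncomputable def W (a b : ℕ) : ℤ :=
  ∑ p ∈ LF (a+b), if IsMotzkin2 p then eps (mlvl p a) else 0

lemma mlvl_append_right (p q : List MStep) (j : ℕ) :
    mlvl (p ++ q) (p.length + j) = mlvl p p.length + mlvl q j := by
  rw [mlvl_add, List.drop_left]
  congr 1
  exact mlvl_append_left p q (le_refl _)

lemma glue {a b : ℕ} {h : ℤ} {p q : List MStep} (hp : p.length = a) (hq : q.length = b)
    (h1 : preC a h p) (h2 : sufC b h q) :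
    IsMotzkin2 (p ++ q) ∧ mlvl (p ++ q) a = h := by
  subst hp; subst hq
  obtain ⟨hall1, hend1⟩ := h1
  obtain ⟨hall2, hend2⟩ := h2
  have hlen : (p ++ q).length = p.length + q.length := List.length_append
  have hat : ∀ j ≤ q.length, mlvl (p ++ q) (p.length + j) = h + mlvl q j := by
    intro j hj
    rw [mlvl_append_right, hend1]
  refine ⟨⟨?_, ?_⟩, ?_⟩
  · rw [hlen, hat q.length (le_refl _), hend2]; ring
  · intro k hk
    rcases le_or_gt k p.length with hk1 | hk1
    · rw [mlvl_append_left p q hk1]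
      exact hall1 k hk1
    · have hj : k = p.length + (k - p.length) := by omega
      rw [hj, hat (k - p.length) (by omega)]
      have := hall2 (k - p.length) (by omega)
      omega
  · rw [mlvl_append_left p q (le_refl _), hend1]

lemma split {a b : ℕ} {p q : List MStep} (hp : p.length = a) (hq : q.length = b)
    (hM : IsMotzkin2 (p ++ q)) :
    preC a (mlvl p a) p ∧ sufC b (mlvl p a) q := by
  subst hp; subst hq
  obtain ⟨hend, hall⟩ := hM
  have hlen : (p ++ q).length = p.length + q.length := List.length_append
  have hat : ∀ j, mlvl (p ++ q) (p.length + j) = mlvl p p.length + mlvl q j := by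
    intro j; rw [mlvl_append_right]
  refine ⟨⟨fun k hk => ?_, rfl⟩, ⟨fun j hj => ?_, ?_⟩⟩
  · have := hall k (by omega)
    rwa [mlvl_append_left p q hk] at this
  · have := hall (p.length + j) (by omega)
    rw [hat j] at this
    omega
  · rw [hlen] at hend
    rw [hat q.length] at hend
    omega

open Classical in
lemma pointwise {a b : ℕ} {p q : List MStep} (hp : p.length = a) (hq : q.length = b) :
    (if IsMotzkin2 (p ++ q) then eps (mlvl (p ++ q) a) else 0) =
      ∑ h ∈ range (a+1), (-1)^h *
        ((if preC a (h:ℤ) p then (1:ℤ) else 0) * (if sufC b (h:ℤ) q then (1:ℤ) else 0)) := by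
  by_cases hM : IsMotzkin2 (p ++ q)
  · obtain ⟨hpre, hsuf⟩ := split hp hq hM
    have h0nn : 0 ≤ mlvl p a := by
      have := hpre.1 a (le_refl _)
      exact this
    have h0le : mlvl p a ≤ (a:ℤ) := mlvl_le p a
    set h0 : ℕ := (mlvl p a).toNat with hh0
    have hcast : (h0 : ℤ) = mlvl p a := Int.toNat_of_nonneg h0nn
    rw [if_pos hM]
    rw [Finset.sum_eq_single h0]
    · have hPQ : mlvl (p ++ q) a = mlvl p a := by
        rw [← hp]; exact mlvl_append_left p q (le_refl _)
      rw [hcast, if_pos hpre, if_pos hsuf, hPQ, ← hcast, eps_coe]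
      ring
    · intro h _ hne
      rw [if_neg, zero_mul, mul_zero]
      rintro ⟨-, hend⟩
      rw [hend] at hcast
      exact hne (by exact_mod_cast hcast.symm)
    · intro habs
      exact absurd (Finset.mem_range.mpr (by omega)) habs
  · rw [if_neg hM]
    symm
    refine Finset.sum_eq_zero fun h _ => ?_
    by_cases h1 : preC a (h:ℤ) p
    · by_cases h2 : sufC b (h:ℤ) q
      · exact absurd (glue hp hq h1 h2).1 hM
      · rw [if_neg h2, mul_zero, mul_zero]
    · rw [if_neg h1, zero_mul, mul_zero]

open Classical in
lemma W_eq (a b : ℕ) : W a b = ∑ h ∈ range (a+1), (-1)^h * pre a h * suf b h := by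
  classical
  have step1 : W a b = ∑ x ∈ LF a ×ˢ LF b,
      (if IsMotzkin2 (x.1 ++ x.2) then eps (mlvl (x.1 ++ x.2) a) else 0) := by
    unfold W
    refine Finset.sum_nbij' (fun p => (p.take a, p.drop a)) (fun x => x.1 ++ x.2)
      ?_ ?_ ?_ ?_ ?_
    · intro p hp
      rw [mem_LF] at hp
      rw [Finset.mem_product, mem_LF, mem_LF, List.length_take, List.length_drop, hp]
      constructor
      · omega
      · omega
    · intro x hx
      rw [Finset.mem_product, mem_LF, mem_LF] at hx
      rw [mem_LF, List.length_append, hx.1, hx.2]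
    · intro p _
      exact List.take_append_drop a p
    · intro x hx
      rw [Finset.mem_product, mem_LF, mem_LF] at hx
      obtain ⟨h1, h2⟩ := hx
      ext : 1
      · simp only []
        rw [← h1, List.take_left]
      · simp only []
        rw [← h1, List.drop_left]
    · intro p _
      rw [List.take_append_drop a p]
  rw [step1, Finset.sum_product]
  have step3 : ∀ p ∈ LF a, ∀ q ∈ LF b,
      (if IsMotzkin2 (p ++ q) then eps (mlvl (p ++ q) a) else 0) =
      ∑ h ∈ range (a+1), (-1)^h *
        ((if preC a (h:ℤ) p then (1:ℤ) else 0) * (if sufC b (h:ℤ) q then (1:ℤ) else 0)) := by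
    intro p hp q hq
    exact pointwise (mem_LF.mp hp) (mem_LF.mp hq)
  calc ∑ p ∈ LF a, ∑ q ∈ LF b, (if IsMotzkin2 (p ++ q) then eps (mlvl (p ++ q) a) else 0)
      = ∑ p ∈ LF a, ∑ q ∈ LF b, ∑ h ∈ range (a+1), (-1)^h *
          ((if preC a (h:ℤ) p then (1:ℤ) else 0) * (if sufC b (h:ℤ) q then (1:ℤ) else 0)) :=
        Finset.sum_congr rfl fun p hp => Finset.sum_congr rfl fun q hq => step3 p hp q hq
    _ = ∑ p ∈ LF a, ∑ h ∈ range (a+1), ∑ q ∈ LF b, (-1)^h *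
          ((if preC a (h:ℤ) p then (1:ℤ) else 0) * (if sufC b (h:ℤ) q then (1:ℤ) else 0)) :=
        Finset.sum_congr rfl fun p _ => Finset.sum_comm
    _ = ∑ h ∈ range (a+1), ∑ p ∈ LF a, ∑ q ∈ LF b, (-1)^h *
          ((if preC a (h:ℤ) p then (1:ℤ) else 0) * (if sufC b (h:ℤ) q then (1:ℤ) else 0)) :=
        Finset.sum_comm
    _ = ∑ h ∈ range (a+1), (-1)^h * pre a h * suf b h := by
        refine Finset.sum_congr rfl fun h _ => ?_
        have hpd : pre a (h:ℤ) = ∑ p ∈ LF a, if preC a (h:ℤ) p then (1:ℤ) else 0 := rfl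
        have hsd : suf b (h:ℤ) = ∑ q ∈ LF b, if sufC b (h:ℤ) q then (1:ℤ) else 0 := rfl
        have key : ∑ p ∈ LF a, ∑ q ∈ LF b, (-1:ℤ)^h *
            ((if preC a (h:ℤ) p then (1:ℤ) else 0) * if sufC b (h:ℤ) q then (1:ℤ) else 0)
            = (-1:ℤ)^h * ((∑ p ∈ LF a, if preC a (h:ℤ) p then (1:ℤ) else 0) *
              (∑ q ∈ LF b, if sufC b (h:ℤ) q then (1:ℤ) else 0)) := by
          rw [Finset.sum_mul_sum, Finset.mul_sum]
          refine Finset.sum_congr rfl fun p _ => ?_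
          rw [Finset.mul_sum]
        rw [key, ← hpd, ← hsd]
        ring

lemma W_eq_S (a b : ℕ) : W a b = S a b := by
  rw [W_eq]
  have e1 : ∀ h ∈ range (a+1), (-1:ℤ)^h * pre a h * suf b h = (-1:ℤ)^h * F a h * F b h := by
    intro h _
    rw [pre_eq_suf, suf_eq_F a h (by positivity), suf_eq_F b h (by positivity)]
  rw [Finset.sum_congr rfl e1]
  unfold S
  refine Finset.sum_subset (Finset.range_subset_range.mpr (by omega)) fun h _ hh => ?_
  rw [Finset.mem_range, not_lt] at hh
  rw [F_zero_of_gt (show (a:ℤ) < h from by exact_mod_cast hh)]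
  ring

open Classical in
lemma card_diff_eq_W (a b : ℕ) :
    ((((LF (a+b)).filter fun p => IsMotzkin2 p ∧ Even (mlvl p a)).card : ℤ) -
      (((LF (a+b)).filter fun p => IsMotzkin2 p ∧ Odd (mlvl p a)).card : ℤ)) = W a b := by
  have cE : (((LF (a+b)).filter fun p => IsMotzkin2 p ∧ Even (mlvl p a)).card : ℤ)
      = ∑ p ∈ LF (a+b), if IsMotzkin2 p ∧ Even (mlvl p a) then (1:ℤ) else 0 := by
    rw [Finset.card_filter, Nat.cast_sum]
    exact Finset.sum_congr rfl fun p _ => by split_ifs <;> simp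
  have cO : (((LF (a+b)).filter fun p => IsMotzkin2 p ∧ Odd (mlvl p a)).card : ℤ)
      = ∑ p ∈ LF (a+b), if IsMotzkin2 p ∧ Odd (mlvl p a) then (1:ℤ) else 0 := by
    rw [Finset.card_filter, Nat.cast_sum]
    exact Finset.sum_congr rfl fun p _ => by split_ifs <;> simp
  rw [cE, cO, ← Finset.sum_sub_distrib]
  refine Finset.sum_congr rfl fun p _ => ?_
  by_cases hM : IsMotzkin2 p
  · by_cases he : Even (mlvl p a)
    · rw [if_pos ⟨hM, he⟩, if_neg (by rintro ⟨-, ho⟩; exact (Int.not_odd_iff_even.mpr he) ho),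
        if_pos hM, eps, if_pos he]
      ring
    · rw [if_neg (by rintro ⟨-, h2⟩; exact he h2),
        if_pos ⟨hM, Int.not_even_iff_odd.mp he⟩, if_pos hM, eps, if_neg he]
      ring
  · rw [if_neg (by rintro ⟨h1, -⟩; exact hM h1), if_neg (by rintro ⟨h1, -⟩; exact hM h1),
      if_neg hM]
    ring

theorem T_eq_motzkin_difference (m n : ℕ) (hm : 0 < m) (hn : 0 < n) :
    T m n =
      ({p : List MStep | IsMotzkin2 p ∧ p.length = m + n - 2 ∧
          Even (mlvl p (m - 1))}.ncard : ℚ) -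
      ({p : List MStep | IsMotzkin2 p ∧ p.length = m + n - 2 ∧
          Odd (mlvl p (m - 1))}.ncard : ℚ) := by
  classical
  obtain ⟨a, rfl⟩ : ∃ a, m = a + 1 := ⟨m-1, by omega⟩
  obtain ⟨b, rfl⟩ : ∃ b, n = b + 1 := ⟨n-1, by omega⟩
  have hL : (a+1) + (b+1) - 2 = a + b := by omega
  have hm1 : (a+1) - 1 = a := by omega
  rw [hL, hm1]
  have hE : {p : List MStep | IsMotzkin2 p ∧ p.length = a + b ∧ Even (mlvl p a)} =
      ↑((LF (a+b)).filter fun p => IsMotzkin2 p ∧ Even (mlvl p a)) := by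
    ext p
    simp only [Set.mem_setOf_eq, Finset.coe_filter, mem_LF]
    tauto
  have hO : {p : List MStep | IsMotzkin2 p ∧ p.length = a + b ∧ Odd (mlvl p a)} =
      ↑((LF (a+b)).filter fun p => IsMotzkin2 p ∧ Odd (mlvl p a)) := by
    ext p
    simp only [Set.mem_setOf_eq, Finset.coe_filter, mem_LF]
    tauto
  rw [hE, hO, Set.ncard_coe_finset, Set.ncard_coe_finset]
  have key := card_diff_eq_W a b
  rw [W_eq_S] at key
  have hst : (S a b : ℚ) = T (a+1) (b+1) := S_eq_T b a
  rw [← hst]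
  exact_mod_cast congrArg (fun z : ℤ => (z : ℚ)) key.symm
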